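/- arXiv:2605.23743 — 4 statements merged into one kernel-verified Lean document; each statement's English description precedes it below -/
import Mathlib

section
/- The number of permutations of {0,1,...,m-1} whose signature (the decreasing subsequence of left-to-right minima) equals a given decreasing list s ending in 0 is the product of all elements c of {0,...,m-1} that do not appear in s. -/
/-- The signature of a ranking: the list of its left-to-right minima (records
with respect to the minimum), in order of appearance. -/
def sig : List ℕ → List ℕ
  | [] => []
  | a :: t => a :: sig (t.filter (· < a))
termination_by l => l.length
decreasing_by simpa using Nat.lt_succ_of_le (List.length_filter_le _ t.attach)

lemma sig_nil : sig [] = [] := by rw [sig]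

lemma sig_cons (a : ℕ) (t : List ℕ) : sig (a :: t) = a :: sig (t.filter (· < a)) := by
  rw [sig]

lemma sig_subset : ∀ (l : List ℕ), ∀ x ∈ sig l, x ∈ l := by
  intro l
  induction l using sig.induct with
  | case1 => simp [sig_nil]
  | case2 a t ih =>
    intro x hx
    rw [sig_cons] at hx
    rcases List.mem_cons.1 hx with h | h
    · simp [h]
    · have hx' := ih x (by rw [List.unattach_filter (g := fun x => decide (x < a)) (hf := fun _ _ => rfl), List.unattach_attach]; exact h)
      rw [List.unattach_filter (g := fun x => decide (x < a)) (hf := fun _ _ => rfl), List.unattach_attach] at hx'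
      exact List.mem_cons_of_mem _ (List.mem_of_mem_filter hx')

lemma sig_cons_all_lt (b : ℕ) (l : List ℕ) (h : ∀ x ∈ l, x < b) :
    sig (b :: l) = b :: sig l := by
  rw [sig_cons, List.filter_eq_self.2 (fun x hx => by simpa using h x hx)]

/-- filtering out `b` from any insertion of `b` gives the original filter -/
lemma filter_permAux (b : ℕ) (p : ℕ → Bool) (hb : p b = false) :
    ∀ (u t : List ℕ), t ∈ List.permutations'Aux b u → t.filter p = u.filter p := by
  intro u
  induction u with
  | nil =>
    intro t ht
    simp only [List.permutations'Aux, List.mem_singleton] at ht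
    subst ht; simp [hb]
  | cons d v ih =>
    intro t ht
    simp only [List.permutations'Aux, List.mem_cons, List.mem_map] at ht
    rcases ht with rfl | ⟨t', ht', rfl⟩
    · simp [List.filter_cons, hb]
    · simp [List.filter_cons, ih t' ht']

lemma sum_map_ite (l : List (List ℕ)) (p q : List ℕ → Prop) [DecidablePred p]
    [DecidablePred q] (n : ℕ) :
    (l.map (fun x => (if p x then 1 else 0) + n * (if q x then 1 else 0))).sum
      = (l.filter (fun x => p x)).length + n * (l.filter (fun x => q x)).length := by
  induction l with
  | nil => simp
  | cons a l ih =>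
    simp only [List.map_cons, List.sum_cons, ih, List.filter_cons]
    by_cases hp : p a <;> by_cases hq : q a <;> simp [hp, hq] <;> ring

lemma countAux (b : ℕ) (l : List ℕ) (s : List ℕ) (h : ∀ x ∈ l, x < b) :
    ((List.permutations'Aux b l).filter (fun t => sig t = s)).length
      = (if b :: sig l = s then 1 else 0) + l.length * (if sig l = s then 1 else 0) := by
  cases l with
  | nil =>
    simp only [List.permutations'Aux, sig_nil, List.length_nil, Nat.zero_mul, Nat.add_zero]
    by_cases hs : [b] = s
    · rw [if_pos hs]
      have : sig [b] = s := by rw [sig_cons]; simpa [sig_nil] using hs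
      simp [List.filter_cons, this]
    · rw [if_neg hs]
      have : sig [b] ≠ s := by rw [sig_cons]; simpa [sig_nil] using hs
      simp [List.filter_cons, this]
  | cons c u =>
    have hc : c < b := h c (by simp)
    have hsig : ∀ t ∈ List.permutations'Aux b u, sig (c :: t) = sig (c :: u) := by
      intro t ht
      rw [sig_cons, sig_cons,
        filter_permAux b (· < c) (by simp [Nat.not_lt.2 hc.le]) u t ht]
    have hmapfilter : ((List.permutations'Aux b u).map (c :: ·)).filter
        (fun t => sig t = s)
        = (((List.permutations'Aux b u).filter (fun t => sig (c :: t) = s)).map (c :: ·)) := by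
      rw [List.filter_map]; rfl
    have hconst : ((List.permutations'Aux b u).filter (fun t => sig (c :: t) = s))
        = if sig (c :: u) = s then (List.permutations'Aux b u) else [] := by
      split
      · next heq =>
        apply List.filter_eq_self.2
        intro t ht; simpa [hsig t ht] using heq
      · next heq =>
        apply List.filter_eq_nil_iff.2
        intro t ht; simpa [hsig t ht] using heq
    have hbsig : sig (b :: c :: u) = b :: sig (c :: u) := sig_cons_all_lt b (c :: u) h
    show (((b :: c :: u) :: ((List.permutations'Aux b u).map (c :: ·))).filter
        (fun t => sig t = s)).length = _
    rw [List.filter_cons, hmapfilter, hconst]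
    by_cases h2 : sig (c :: u) = s
    · have h1 : ¬ (b :: sig (c :: u) = s) := by
        rw [← h2]
        exact List.cons_ne_self _ _
      have hd : (decide (sig (b :: c :: u) = s)) = false := by
        simp [hbsig, h1]
      rw [hd, if_pos h2, if_neg h1, if_pos h2]
      simp [List.length_permutations'Aux]
    · by_cases h1 : b :: sig (c :: u) = s
      · have hd : (decide (sig (b :: c :: u) = s)) = true := by simp [hbsig, h1]
        rw [hd, if_pos h1, if_neg h2, if_neg h2]
        simp
      · have hd : (decide (sig (b :: c :: u) = s)) = false := by simp [hbsig, h1]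
        rw [hd, if_neg h1, if_neg h2, if_neg h2]
        simp

lemma chain'_gt_head_mem {n : ℕ} {s' : List ℕ} (hdec : (n :: s').Chain' (· > ·)) :
    ∀ x ∈ s', x < n := by
  have := List.isChain_iff_pairwise.1 hdec
  intro x hx
  exact List.rel_of_pairwise_cons this hx

/-- The number of permutations of `{0, …, m-1}` whose signature equals a given
strictly decreasing list `s` ending in `0` is the product of all elements of
`{0, …, m-1}` not appearing in `s`. -/
theorem stmt0 (m : ℕ) (hm : 0 < m) (s : List ℕ)
    (hdec : s.Chain' (· > ·)) (hmem : ∀ c ∈ s, c < m)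
    (hlast : s.getLast? = some 0) :
    ((List.range m).permutations.filter (fun r => sig r = s)).length
      = ∏ c ∈ (Finset.range m).filter (fun c => c ∉ s), c := by
  obtain ⟨n, rfl⟩ : ∃ n, m = n + 1 := ⟨m - 1, (Nat.succ_pred_eq_of_pos hm).symm⟩
  clear hm
  induction n generalizing s with
  | zero =>
    have hs : s = [0] := by
      cases s with
      | nil => simp at hlast
      | cons a t =>
        have ha : a = 0 := Nat.lt_one_iff.1 (hmem a (by simp))
        subst ha
        cases t with
        | nil => rfl
        | cons b t' =>
          have hb : b = 0 := Nat.lt_one_iff.1 (hmem b (by simp))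
          subst hb
          exact absurd (List.isChain_cons_cons.1 hdec).1 (by simp)
    subst hs
    have h0 : sig [0] = [0] := by rw [sig_cons]; simp [sig_nil]
    rw [((List.permutations_perm_permutations' (List.range 1)).filter _).length_eq,
      show List.range 1 = [0] by simp [List.range_succ]]
    simp only [List.permutations', List.permutations'Aux, List.flatMap_cons,
      List.flatMap_nil, List.append_nil, List.filter_cons, h0]
    norm_num
    decide
  | succ n ih =>
    have hperm : List.Perm (List.range (n + 2)).permutations
        ((List.permutations' (List.range (n + 1))).flatMap
            (List.permutations'Aux (n + 1))) := by
      have h1 : List.Perm (List.range (n + 2)) ((n + 1) :: List.range (n + 1)) := by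
        rw [List.range_succ]
        exact List.perm_append_singleton _ _
      have h2 := h1.permutations.trans
        (List.permutations_perm_permutations' ((n + 1) :: List.range (n + 1)))
      simpa using h2
    rw [(hperm.filter _).length_eq, List.filter_flatMap, List.length_flatMap]
    have hmapcongr : ∀ r' ∈ List.permutations' (List.range (n + 1)),
        ((List.length ∘ fun a => List.filter (fun t => decide (sig t = s))
            (List.permutations'Aux (n + 1) a)) r')
          = (if (n + 1) :: sig r' = s then 1 else 0)
              + (n + 1) * (if sig r' = s then 1 else 0) := by
      intro r' hr'
      have hr'p : List.Perm r' (List.range (n + 1)) := List.mem_permutations'.1 hr'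
      have hlt : ∀ x ∈ r', x < n + 1 := fun x hx => by
        simpa using hr'p.subset hx
      have hlen : r'.length = n + 1 := by simpa using hr'p.length_eq
      simpa [hlen] using countAux (n + 1) r' s hlt
    rw [List.map_congr_left (f := fun a => (List.filter (fun r => decide (sig r = s)) (List.permutations'Aux (n + 1) a)).length) hmapcongr,
      sum_map_ite _ (fun x => (n + 1) :: sig x = s) (fun x => sig x = s)]
    by_cases hn : (n + 1) ∈ s
    · -- s = (n+1) :: s'
      obtain ⟨s', rfl⟩ : ∃ s', s = (n + 1) :: s' := by
        cases s with
        | nil => simp at hn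
        | cons a t =>
          have ha : a = n + 1 := by
            rcases List.mem_cons.1 hn with h | h
            · exact h.symm
            · have h1 := chain'_gt_head_mem hdec (n + 1) h
              have h2 := hmem a (by simp)
              omega
          exact ⟨t, by rw [ha]⟩
      have hs'lt : ∀ x ∈ s', x < n + 1 := chain'_gt_head_mem hdec
      have hs'ne : s' ≠ [] := by
        rintro rfl
        simp at hlast
      have h2 : (List.filter (fun x => decide (sig x = (n + 1) :: s'))
          (List.permutations' (List.range (n + 1)))).length = 0 := by
        rw [List.length_eq_zero_iff, List.filter_eq_nil_iff]
        intro r' hr'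
        simp only [decide_eq_true_eq]
        intro heq
        have h3 : (n + 1) ∈ r' := sig_subset r' (n + 1) (heq ▸ (by simp))
        have := (List.mem_permutations'.1 hr').subset h3
        simp at this
      have h1 : (List.filter (fun x => decide ((n + 1) :: sig x = (n + 1) :: s'))
          (List.permutations' (List.range (n + 1)))).length
            = ∏ c ∈ (Finset.range (n + 1)).filter (fun c => c ∉ s'), c := by
        have hih := ih s' (hdec.tail) (by
          cases s' with
          | nil => exact absurd rfl hs'ne
          | cons b t => simpa [List.getLast?_cons_cons] using hlast) hs'lt
        rw [← hih, ← ((List.permutations_perm_permutations'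
          (List.range (n + 1))).filter _).length_eq]
        congr 1
        apply List.filter_congr
        intro r' _
        simp
      rw [h1, h2]
      have hprod : (Finset.range (n + 2)).filter (fun c => c ∉ (n + 1) :: s')
          = (Finset.range (n + 1)).filter (fun c => c ∉ s') := by
        ext c
        simp only [Finset.mem_filter, Finset.mem_range, List.mem_cons]
        constructor
        · rintro ⟨hc1, hc2⟩
          push_neg at hc2
          exact ⟨lt_of_le_of_ne (Nat.lt_succ_iff.1 hc1) hc2.1, hc2.2⟩
        · rintro ⟨hc1, hc2⟩
          refine ⟨by omega, ?_⟩
          push_neg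
          exact ⟨by omega, hc2⟩
      rw [hprod]
      ring
    · -- n+1 ∉ s
      have hslt : ∀ c ∈ s, c < n + 1 := by
        intro c hc
        have h1 := hmem c hc
        have h2 : c ≠ n + 1 := fun h => hn (h ▸ hc)
        omega
      have h1 : (List.filter (fun x => decide ((n + 1) :: sig x = s))
          (List.permutations' (List.range (n + 1)))).length = 0 := by
        rw [List.length_eq_zero_iff, List.filter_eq_nil_iff]
        intro r' _
        simp only [decide_eq_true_eq]
        intro heq
        exact hn (heq ▸ (by simp))
      have h2 : (List.filter (fun x => decide (sig x = s))
          (List.permutations' (List.range (n + 1)))).length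
            = ∏ c ∈ (Finset.range (n + 1)).filter (fun c => c ∉ s), c := by
        rw [← ih s hdec hlast hslt, ← ((List.permutations_perm_permutations'
          (List.range (n + 1))).filter _).length_eq]
      rw [h1, h2]
      have hprod : (Finset.range (n + 2)).filter (fun c => c ∉ s)
          = insert (n + 1) ((Finset.range (n + 1)).filter (fun c => c ∉ s)) := by
        ext c
        simp only [Finset.mem_filter, Finset.mem_range, Finset.mem_insert]
        constructor
        · rintro ⟨hc1, hc2⟩
          rcases Nat.lt_succ_iff_lt_or_eq.1 hc1 with h | h
          · exact Or.inr ⟨h, hc2⟩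
          · exact Or.inl h
        · rintro (rfl | ⟨hc1, hc2⟩)
          · exact ⟨by omega, hn⟩
          · exact ⟨by omega, hc2⟩
      rw [hprod, Finset.prod_insert (by simp)]
      ring
end

section
/- For each strictly decreasing list s of elements of {0,...,m-1} ending in 0, the representative ρ(s) (obtained by scanning s and, after each element s_i, appending all not-yet-used candidates with index greater than s_i in decreasing order) is a permutation of {0,...,m-1} whose signature is exactly s, i.e., σ(ρ(s)) = s. -/
/-- Auxiliary function for the representative: scan the signature, and after
each element append all not-yet-used larger candidates in decreasing order;
`used` records the candidates already appended. -/
def rhoAux (m : ℕ) : List ℕ → List ℕ → List ℕ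
  | _, [] => []
  | used, a :: t =>
      let block := (List.range m).reverse.filter (fun c => a < c ∧ c ∉ used)
      a :: block ++ rhoAux m (used ++ a :: block) t

/-- The representative `ρ(s)` of a signature `s`. -/
def rho (m : ℕ) (s : List ℕ) : List ℕ := rhoAux m [] s

lemma rhoAux_spec (m : ℕ) : ∀ (s : List ℕ) (b : ℕ) (used : List ℕ),
    b ≤ m →
    (∀ c, c ∈ used ↔ b ≤ c ∧ c < m) →
    s ≠ [] →
    s.Pairwise (· > ·) →
    (∀ c ∈ s, c < b) →
    s.getLast? = some 0 →
    (rhoAux m used s).Perm (List.range b) ∧ sig (rhoAux m used s) = s := by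
  intro s
  induction s with
  | nil => simp
  | cons a t ih =>
    intro b used hb hused _ hpw hlt hlast
    have hab : a < b := hlt a List.mem_cons_self
    set block := (List.range m).reverse.filter (fun c => a < c ∧ c ∉ used) with hbdef
    have hblock : ∀ c, c ∈ block ↔ a < c ∧ c < b := by
      intro c
      simp only [hbdef, List.mem_filter, List.mem_reverse, List.mem_range,
        decide_eq_true_eq, hused]
      omega
    have hbnd : block.Nodup :=
      (List.nodup_reverse.mpr (List.nodup_range (n := m))).filter _
    have hrho : rhoAux m used (a :: t) = a :: block ++ rhoAux m (used ++ a :: block) t := rfl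
    cases t with
    | nil =>
      have ha0 : a = 0 := by simpa using hlast
      subst ha0
      rw [hrho]
      simp only [rhoAux, List.append_nil]
      constructor
      · rw [List.perm_ext_iff_of_nodup _ (List.nodup_range (n := b))]
        · intro c
          simp only [List.mem_cons, hblock, List.mem_range]
          omega
        · refine List.nodup_cons.mpr ⟨?_, hbnd⟩
          intro h
          have := (hblock 0).mp h
          omega
      · rw [sig.eq_2]
        have : block.filter (· < 0) = [] := by
          simp only [List.filter_eq_nil_iff]
          intro c _
          simp
        rw [this, sig.eq_1]
    | cons a' t' =>
      have htlt : ∀ c ∈ a' :: t', c < a := (List.pairwise_cons.mp hpw).1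
      have hused' : ∀ c, c ∈ used ++ a :: block ↔ a ≤ c ∧ c < m := by
        intro c
        simp only [List.mem_append, List.mem_cons, hused, hblock]
        omega
      have hlast' : (a' :: t').getLast? = some 0 := by
        rw [List.getLast?_cons_cons] at hlast; exact hlast
      obtain ⟨hperm, hsig⟩ := ih a (used ++ a :: block) (le_of_lt (lt_of_lt_of_le hab hb))
        hused' (by simp) (List.pairwise_cons.mp hpw).2 htlt hlast'
      set rest := rhoAux m (used ++ a :: block) (a' :: t') with hrdef
      have hrmem : ∀ c ∈ rest, c < a := by
        intro c hc
        have := hperm.mem_iff.mp hc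
        simpa using this
      rw [hrho]
      constructor
      · rw [List.perm_ext_iff_of_nodup _ (List.nodup_range (n := b))]
        · intro c
          simp only [List.cons_append, List.mem_cons, List.mem_append, hblock,
            List.mem_range]
          constructor
          · rintro (rfl | h | h)
            · omega
            · omega
            · exact lt_trans (hrmem c h) hab
          · intro h
            by_cases hca : c = a
            · exact Or.inl hca
            · by_cases hca' : a < c
              · exact Or.inr (Or.inl ⟨hca', h⟩)
              · exact Or.inr (Or.inr (hperm.mem_iff.mpr (by simp; omega)))
        · rw [List.cons_append, List.nodup_cons]
          refine ⟨?_, List.Nodup.append hbnd (hperm.nodup_iff.mpr (List.nodup_range (n := a))) ?_⟩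
          · intro h
            rcases List.mem_append.mp h with h | h
            · exact absurd ((hblock a).mp h).1 (lt_irrefl a)
            · exact absurd (hrmem a h) (lt_irrefl a)
          · intro c hc hc'
            exact absurd (hrmem c hc') (not_lt.mpr (le_of_lt ((hblock c).mp hc).1))
      · rw [List.cons_append, sig.eq_2]
        have h1 : block.filter (· < a) = [] := by
          simp only [List.filter_eq_nil_iff, decide_eq_true_eq]
          intro c hc
          exact not_lt.mpr (le_of_lt ((hblock c).mp hc).1)
        have h2 : rest.filter (· < a) = rest := by
          apply List.filter_eq_self.mpr
          intro c hc
          simpa using hrmem c hc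
        rw [List.filter_append, h1, h2, List.nil_append, hsig]

/-- For each strictly decreasing list `s` of elements of `{0, …, m-1}` ending
in `0`, the representative `ρ(s)` is a permutation of `{0, …, m-1}` whose
signature is exactly `s`. -/
theorem stmt3 (m : ℕ) (hm : 0 < m) (s : List ℕ)
    (hdec : s.Chain' (· > ·)) (hmem : ∀ c ∈ s, c < m)
    (hlast : s.getLast? = some 0) :
    (rho m s).Perm (List.range m) ∧ sig (rho m s) = s := by
  have hne : s ≠ [] := by rintro rfl; simp at hlast
  have hpw : s.Pairwise (· > ·) := List.isChain_iff_pairwise.mp hdec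
  exact rhoAux_spec m s m [] le_rfl (by simp) hne hpw hmem hlast
end

section
/- Asymptotics of the fooling set size for IRV: with n = ℓ·m! and ℓ, m, or both tending to infinity, log of [ n! / ∏_{S ⊆ {1,...,m-1}} (ℓ ∏_{c∈S} c)! ] is asymptotically equivalent to n (log m)^2 / 2. -/
open Filter Asymptotics Real Finset

lemma log_fact_bounds : ∀ n : ℕ, 1 ≤ n →
    (n:ℝ) * Real.log n - n + 1 ≤ Real.log (Nat.factorial n) ∧
    Real.log (Nat.factorial n) ≤ (n:ℝ) * Real.log n - n + 1 + Real.log n := by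
  intro n hn
  induction n, hn using Nat.le_induction with
  | base => simp
  | succ n hn ih =>
    obtain ⟨ih1, ih2⟩ := ih
    have hn0 : (0:ℝ) < n := by exact_mod_cast hn
    have hn1 : (0:ℝ) < (n:ℝ) + 1 := by positivity
    have hfact : Real.log (Nat.factorial (n+1)) = Real.log (n+1) + Real.log (Nat.factorial n) := by
      rw [Nat.factorial_succ, Nat.cast_mul, Real.log_mul (by positivity)
        (by exact_mod_cast (Nat.factorial_pos n).ne')]
      push_cast; ring_nf
    -- log (n+1) - log n bounds
    have hdiff_le : Real.log ((n:ℝ)+1) - Real.log n ≤ 1 / n := by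
      rw [← Real.log_div (by positivity) hn0.ne']
      have := Real.log_le_sub_one_of_pos (show (0:ℝ) < ((n:ℝ)+1)/n by positivity)
      have h2 : ((n:ℝ)+1)/n - 1 = 1/n := by field_simp; ring
      linarith
    have hdiff_ge : 1 / ((n:ℝ)+1) ≤ Real.log ((n:ℝ)+1) - Real.log n := by
      have := Real.log_le_sub_one_of_pos (show (0:ℝ) < (n:ℝ)/((n:ℝ)+1) by positivity)
      rw [Real.log_div hn0.ne' hn1.ne'] at this
      have h2 : (n:ℝ)/((n:ℝ)+1) - 1 = -(1/((n:ℝ)+1)) := by field_simp; ring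
      linarith
    constructor
    · rw [hfact]
      push_cast
      have : (n:ℝ) * (Real.log ((n:ℝ)+1) - Real.log n) ≤ 1 := by
        calc (n:ℝ) * (Real.log ((n:ℝ)+1) - Real.log n) ≤ (n:ℝ) * (1/n) :=
          mul_le_mul_of_nonneg_left hdiff_le hn0.le
        _ = 1 := by field_simp
      nlinarith [ih1]
    · rw [hfact]
      push_cast
      have : 1 ≤ ((n:ℝ)+1) * (Real.log ((n:ℝ)+1) - Real.log n) := by
        calc (1:ℝ) = ((n:ℝ)+1) * (1/((n:ℝ)+1)) := by field_simp
        _ ≤ ((n:ℝ)+1) * (Real.log ((n:ℝ)+1) - Real.log n) :=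
          mul_le_mul_of_nonneg_left hdiff_ge hn1.le
      nlinarith [ih2]

lemma prod_Icc_add_one (k : ℕ) : ∏ c ∈ Finset.Icc 1 k, ((c:ℝ)+1) = (Nat.factorial (k+1) : ℝ) := by
  induction k with
  | zero => simp
  | succ k ih =>
    rw [Finset.prod_Icc_succ_top (by omega), ih, Nat.factorial_succ (k+1)]
    push_cast; ring

lemma sum_powerset_prod (A : Finset ℕ) :
    ∑ S ∈ A.powerset, ∏ c ∈ S, (c:ℝ) = ∏ c ∈ A, ((c:ℝ)+1) := by
  rw [Finset.prod_add (fun c : ℕ => (c:ℝ)) (fun _ : ℕ => (1:ℝ)) A]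
  simp

lemma sum_powerset_mem (A : Finset ℕ) (c : ℕ) (hc : c ∈ A) :
    ∑ S ∈ A.powerset, (if c ∈ S then ∏ d ∈ S, (d:ℝ) else 0)
      = c * ∏ d ∈ A.erase c, ((d:ℝ)+1) := by
  have hA : A = insert c (A.erase c) := (Finset.insert_erase hc).symm
  have hce : c ∉ A.erase c := Finset.notMem_erase c A
  rw [hA, Finset.sum_powerset_insert hce]
  have h1 : ∑ S ∈ (A.erase c).powerset, (if c ∈ S then ∏ d ∈ S, (d:ℝ) else 0) = 0 := by
    apply Finset.sum_eq_zero
    intro S hS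
    rw [if_neg]
    exact fun h => hce (Finset.mem_powerset.1 hS h)
  have h2 : ∑ S ∈ (A.erase c).powerset, (if c ∈ insert c S then ∏ d ∈ insert c S, (d:ℝ) else 0)
      = c * ∏ d ∈ A.erase c, ((d:ℝ)+1) := by
    rw [← sum_powerset_prod, Finset.mul_sum]
    apply Finset.sum_congr rfl
    intro S hS
    rw [if_pos (Finset.mem_insert_self c S),
      Finset.prod_insert (fun h => hce (Finset.mem_powerset.1 hS h))]
  rw [h1, h2, zero_add, Finset.erase_insert hce]

lemma swap_identity (A : Finset ℕ) :
    ∑ S ∈ A.powerset, (∏ d ∈ S, (d:ℝ)) * (∑ c ∈ S, Real.log c)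
      = ∑ c ∈ A, Real.log c * (c * ∏ d ∈ A.erase c, ((d:ℝ)+1)) := by
  have key : ∀ S ∈ A.powerset, (∏ d ∈ S, (d:ℝ)) * (∑ c ∈ S, Real.log c)
      = ∑ c ∈ A, (if c ∈ S then (∏ d ∈ S, (d:ℝ)) * Real.log c else 0) := by
    intro S hS
    rw [Finset.sum_ite_mem, Finset.inter_comm,
      (Finset.inter_eq_left.2 (Finset.mem_powerset.1 hS)), Finset.mul_sum]
  rw [Finset.sum_congr rfl key, Finset.sum_comm]
  apply Finset.sum_congr rfl
  intro c hc
  rw [← sum_powerset_mem A c hc, Finset.mul_sum]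
  apply Finset.sum_congr rfl
  intro S _
  split_ifs <;> ring

lemma integral_log_div (a b : ℝ) (ha : 0 < a) (hab : a ≤ b) :
    ∫ x in a..b, Real.log x / x = Real.log b ^ 2 / 2 - Real.log a ^ 2 / 2 := by
  have h : ∀ x ∈ Set.uIcc a b, HasDerivAt (fun y => Real.log y ^ 2 / 2) (Real.log x / x) x := by
    intro x hx
    rw [Set.uIcc_of_le hab] at hx
    have hx0 : (0:ℝ) < x := lt_of_lt_of_le ha hx.1
    have := ((Real.hasDerivAt_log hx0.ne').pow 2).div_const 2
    refine this.congr_deriv ?_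
    push_cast
    ring
  have hint : IntervalIntegrable (fun x => Real.log x / x) MeasureTheory.volume a b := by
    apply ContinuousOn.intervalIntegrable
    intro x hx
    rw [Set.uIcc_of_le hab] at hx
    have hx0 : x ≠ 0 := (lt_of_lt_of_le ha hx.1).ne'
    exact ((Real.continuousAt_log hx0).div continuousAt_id hx0).continuousWithinAt
  simpa using intervalIntegral.integral_eq_sub_of_hasDerivAt h hint

lemma antitone_g (M : ℕ) : AntitoneOn (fun x : ℝ => Real.log x / x) (Set.Icc (3:ℝ) (M:ℝ)) := by
  apply Real.log_div_self_antitoneOn.mono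
  intro x hx
  have : Real.exp 1 ≤ 3 := le_trans Real.exp_one_lt_d9.le (by norm_num)
  exact le_trans this hx.1

lemma sum_g_bounds (M : ℕ) (hM : 5 ≤ M) :
    |(∑ c ∈ Finset.Ico 1 M, Real.log c / c) - Real.log M ^ 2 / 2| ≤ 3 := by
  have hM3 : (3:ℝ) ≤ (M:ℝ) := by exact_mod_cast le_trans (by norm_num) hM
  have hlog3 : Real.log 3 ≤ 2 := by
    have := Real.log_le_sub_one_of_pos (show (0:ℝ) < 3 by norm_num); linarith
  have hlog3' : (0:ℝ) ≤ Real.log 3 := Real.log_nonneg (by norm_num)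
  have hlog2 : Real.log 2 ≤ 1 := by
    have := Real.log_le_sub_one_of_pos (show (0:ℝ) < 2 by norm_num); linarith
  have hlog2' : (0:ℝ) ≤ Real.log 2 := Real.log_nonneg (by norm_num)
  -- split the sum
  have hsplit : ∑ c ∈ Finset.Ico 1 M, Real.log c / c
      = Real.log 2 / 2 + ∑ c ∈ Finset.Ico 3 M, Real.log c / c := by
    rw [Finset.sum_eq_sum_Ico_succ_bot (by omega) (fun c : ℕ => Real.log c / c),
        Finset.sum_eq_sum_Ico_succ_bot (show 2 < M by omega) (fun c : ℕ => Real.log c / c)]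
    norm_num
  -- lower bound
  have hlow : Real.log M ^ 2 / 2 - Real.log 3 ^ 2 / 2 ≤ ∑ c ∈ Finset.Ico 3 M, Real.log c / c := by
    have := AntitoneOn.integral_le_sum_Ico (f := fun x : ℝ => Real.log x / x)
      (show 3 ≤ M by omega) (by exact_mod_cast antitone_g M)
    rw [show ((3:ℕ):ℝ) = 3 by norm_num] at this
    rw [integral_log_div 3 M (by norm_num) (by exact_mod_cast hM3)] at this
    exact_mod_cast this
  -- upper bound
  have hup : ∑ c ∈ Finset.Ico 3 M, Real.log c / c ≤ Real.log M ^ 2 / 2 + 1 := by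
    have h1 : ∑ c ∈ Finset.Ico 3 M, Real.log c / c
        = Real.log 3 / 3 + ∑ c ∈ Finset.Ico 4 M, Real.log c / c := by
      rw [Finset.sum_eq_sum_Ico_succ_bot (show 3 < M by omega) (fun c : ℕ => Real.log c / c)]
      norm_num
    have h2 : ∑ c ∈ Finset.Ico 4 M, Real.log c / c ≤ Real.log M ^ 2 / 2 := by
      have key := AntitoneOn.sum_le_integral_Ico (f := fun x : ℝ => Real.log x / x)
        (show 3 ≤ M - 1 by omega) (by
          have := antitone_g (M-1)
          exact_mod_cast this)
      rw [show ((3:ℕ):ℝ) = 3 by norm_num] at key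
      rw [integral_log_div 3 (M-1 : ℕ) (by norm_num) (by
        have : (4:ℝ) ≤ ((M-1 : ℕ):ℝ) := by exact_mod_cast (show 4 ≤ M - 1 by omega)
        linarith)] at key
      have hre : ∑ i ∈ Finset.Ico 3 (M-1), Real.log ((i+1 : ℕ):ℝ) / ((i+1 : ℕ):ℝ)
          = ∑ c ∈ Finset.Ico 4 M, Real.log c / c := by
        rw [show Finset.Ico 4 M = Finset.Ico (3+1) ((M-1)+1) by congr 1; omega]
        rw [Finset.sum_Ico_add' (fun c : ℕ => Real.log c / c) 3 (M-1) 1]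
      rw [hre] at key
      have hmono : Real.log ((M-1:ℕ):ℝ) ^ 2 ≤ Real.log M ^ 2 := by
        have h1 : ((M-1:ℕ):ℝ) ≤ (M:ℝ) := by exact_mod_cast Nat.sub_le M 1
        have h2 : (1:ℝ) ≤ ((M-1:ℕ):ℝ) := by exact_mod_cast (show 1 ≤ M - 1 by omega)
        have := Real.log_le_log (by linarith) h1
        have h0 : (0:ℝ) ≤ Real.log ((M-1:ℕ):ℝ) := Real.log_nonneg h2
        nlinarith
      have h3sq : (0:ℝ) ≤ Real.log 3 ^ 2 / 2 := by positivity
      linarith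
    have h3 : Real.log 3 / 3 ≤ 1 := by linarith
    linarith
  rw [hsplit]
  rw [abs_le]
  constructor <;> nlinarith

lemma A_bound (M : ℕ) (hM : 5 ≤ M) :
    |(∑ c ∈ Finset.Ico 1 M, Real.log c / (c + 1)) - Real.log M ^ 2 / 2|
      ≤ 3 + Real.log M := by
  have hlogM : (0:ℝ) ≤ Real.log M := Real.log_nonneg (by exact_mod_cast le_trans (by norm_num) hM)
  have htel : ∑ c ∈ Finset.Ico 1 M, ((1:ℝ)/c - 1/(c+1)) = 1 - 1/M := by
    rw [Finset.sum_Ico_eq_sum_range]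
    have := Finset.sum_range_sub' (fun i : ℕ => (1:ℝ)/(1+i)) (M-1)
    rw [show ∑ i ∈ Finset.range (M-1), ((1:ℝ)/((1+i:ℕ)) - 1/((1+i:ℕ)+1))
        = ∑ i ∈ Finset.range (M-1), ((1:ℝ)/(1+(i:ℝ)) - 1/(1+((i+1:ℕ):ℝ))) by
      apply Finset.sum_congr rfl; intro i _; push_cast; ring_nf]
    rw [this]
    have : ((1:ℝ) + ((M-1:ℕ):ℝ)) = (M:ℝ) := by
      have : (1:ℕ) ≤ M := by omega
      push_cast [Nat.cast_sub this]; ring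
    rw [this]
    norm_num
  have hD0 : (0:ℝ) ≤ ∑ c ∈ Finset.Ico 1 M, (Real.log c / c - Real.log c / (c+1)) := by
    apply Finset.sum_nonneg
    intro c hc
    have hc1 : 1 ≤ c := (Finset.mem_Ico.1 hc).1
    have hc0 : (0:ℝ) < c := by exact_mod_cast hc1
    have hl : (0:ℝ) ≤ Real.log c := Real.log_nonneg (by exact_mod_cast hc1)
    have : (1:ℝ)/(c+1) ≤ 1/c := by
      apply one_div_le_one_div_of_le hc0; linarith
    calc (0:ℝ) ≤ Real.log c * (1/c - 1/(c+1)) := by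
          apply mul_nonneg hl; linarith
      _ = Real.log c / c - Real.log c / (c+1) := by field_simp
  have hD1 : ∑ c ∈ Finset.Ico 1 M, (Real.log c / c - Real.log c / (c+1)) ≤ Real.log M := by
    calc ∑ c ∈ Finset.Ico 1 M, (Real.log c / c - Real.log c / (c+1))
        ≤ ∑ c ∈ Finset.Ico 1 M, Real.log M * ((1:ℝ)/c - 1/(c+1)) := by
          apply Finset.sum_le_sum
          intro c hc
          have hc1 : 1 ≤ c := (Finset.mem_Ico.1 hc).1
          have hcM : c ≤ M := le_of_lt (Finset.mem_Ico.1 hc).2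
          have hc0 : (0:ℝ) < c := by exact_mod_cast hc1
          have hl : Real.log c ≤ Real.log M := by
            apply Real.log_le_log hc0; exact_mod_cast hcM
          have hl0 : (0:ℝ) ≤ Real.log c := Real.log_nonneg (by exact_mod_cast hc1)
          have hpos : (0:ℝ) ≤ 1/(c:ℝ) - 1/((c:ℝ)+1) := by
            have : (1:ℝ)/(c+1) ≤ 1/c := by apply one_div_le_one_div_of_le hc0; linarith
            linarith
          calc Real.log c / c - Real.log c / (c+1) = Real.log c * (1/c - 1/(c+1)) := by
                field_simp
            _ ≤ Real.log M * (1/c - 1/(c+1)) := mul_le_mul_of_nonneg_right hl hpos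
      _ = Real.log M * (1 - 1/M) := by rw [← Finset.mul_sum, htel]
      _ ≤ Real.log M := by
          have hM0 : (0:ℝ) < M := by exact_mod_cast (by omega : 0 < M)
          have : (0:ℝ) ≤ 1/(M:ℝ) := by positivity
          nlinarith
  have h1 := sum_g_bounds M hM
  have hsum : ∑ c ∈ Finset.Ico 1 M, Real.log c / (c+1)
      = (∑ c ∈ Finset.Ico 1 M, Real.log c / c)
        - ∑ c ∈ Finset.Ico 1 M, (Real.log c / c - Real.log c / (c+1)) := by
    rw [Finset.sum_sub_distrib]; ring
  rw [hsum]
  rw [abs_le] at h1 ⊢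
  constructor <;> linarith

set_option maxHeartbeats 2000000 in
lemma main_est (L M : ℕ) (hL : 1 ≤ L) (hM : 5 ≤ M) :
    |Real.log ((Nat.factorial (L * Nat.factorial M) : ℝ) /
        ∏ S ∈ (Finset.Icc 1 (M - 1)).powerset, (Nat.factorial (L * ∏ c ∈ S, c) : ℝ))
      - ((L * Nat.factorial M : ℕ):ℝ) * Real.log M ^ 2 / 2|
    ≤ ((L * Nat.factorial M : ℕ) : ℝ) * (4 + 4 * Real.log M)
      + 2 ^ M * ((L:ℝ) + M * Real.log M) := by
  set k := M - 1 with hk_def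
  have hk : k + 1 = M := by omega
  set A := Finset.Icc 1 k with hA_def
  set P := A.powerset with hP_def
  set N := L * Nat.factorial M with hN_def
  -- basic positivity
  have hcmem : ∀ c ∈ A, 1 ≤ c := fun c hc => (Finset.mem_Icc.1 hc).1
  have hppos : ∀ S ∈ P, 0 < ∏ c ∈ S, c := by
    intro S hS
    apply Finset.prod_pos
    intro c hc
    exact hcmem c (Finset.mem_powerset.1 hS hc)
  have haS1 : ∀ S ∈ P, 1 ≤ L * ∏ c ∈ S, c := fun S hS =>
    Nat.one_le_iff_ne_zero.2 (Nat.mul_ne_zero (by omega) (hppos S hS).ne')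
  have haSN : ∀ S ∈ P, L * ∏ c ∈ S, c ≤ N := by
    intro S hS
    apply Nat.mul_le_mul_left
    calc ∏ c ∈ S, c ≤ ∏ c ∈ A, c := by
          apply Finset.prod_le_prod_of_subset_of_one_le' (Finset.mem_powerset.1 hS)
          intro c hc _; exact hcmem c hc
      _ = Nat.factorial k := by
          rw [hA_def, show Finset.Icc 1 k = Finset.Ico 1 (k+1) by rw [Finset.Ico_add_one_right_eq_Icc]]
          exact Finset.prod_Ico_id_eq_factorial k
      _ ≤ Nat.factorial M := Nat.factorial_le (by omega)
  have hN1 : 1 ≤ N := le_trans (Nat.one_le_iff_ne_zero.2 (Nat.mul_ne_zero (by omega)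
      (Nat.factorial_pos M).ne')) (le_refl N)
  have hNR : (0:ℝ) < (N:ℝ) := by exact_mod_cast hN1
  have hlogN0 : (0:ℝ) ≤ Real.log N := Real.log_nonneg (by exact_mod_cast hN1)
  -- log of the ratio
  have hsplit : Real.log ((Nat.factorial N : ℝ) / ∏ S ∈ P, (Nat.factorial (L * ∏ c ∈ S, c) : ℝ))
      = Real.log (Nat.factorial N) - ∑ S ∈ P, Real.log (Nat.factorial (L * ∏ c ∈ S, c)) := by
    rw [Real.log_div (by exact_mod_cast (Nat.factorial_pos N).ne') (by
        apply Finset.prod_ne_zero_iff.2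
        intro S hS
        exact_mod_cast (Nat.factorial_pos _).ne'),
      Real.log_prod]
    intro S hS
    exact_mod_cast (Nat.factorial_pos _).ne'
  -- Stirling control
  set main : ℝ := (N:ℝ) * Real.log N - ∑ S ∈ P, ((L * ∏ c ∈ S, c : ℕ):ℝ)
      * Real.log ((L * ∏ c ∈ S, c : ℕ):ℝ) with hmain_def
  have hsumaS : ∑ S ∈ P, ((L * ∏ c ∈ S, c : ℕ):ℝ) = (N:ℝ) := by
    push_cast
    rw [← Finset.mul_sum, sum_powerset_prod, prod_Icc_add_one, hk, hN_def]
    push_cast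
    ring
  have hcard : (P.card : ℝ) = 2 ^ k := by
    rw [hP_def, Finset.card_powerset, hA_def, Nat.card_Icc]
    push_cast
    norm_num
  have hstirling : |Real.log ((Nat.factorial N : ℝ) / ∏ S ∈ P, (Nat.factorial (L * ∏ c ∈ S, c) : ℝ))
      - main| ≤ 2 ^ M * (1 + Real.log N) := by
    rw [hsplit]
    obtain ⟨hlo, hhi⟩ := log_fact_bounds N hN1
    have hSlo : ∀ S ∈ P, ((L * ∏ c ∈ S, c : ℕ):ℝ) * Real.log ((L * ∏ c ∈ S, c : ℕ):ℝ)
        - ((L * ∏ c ∈ S, c : ℕ):ℝ) + 1 ≤ Real.log (Nat.factorial (L * ∏ c ∈ S, c)) :=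
      fun S hS => (log_fact_bounds _ (haS1 S hS)).1
    have hShi : ∀ S ∈ P, Real.log (Nat.factorial (L * ∏ c ∈ S, c))
        ≤ ((L * ∏ c ∈ S, c : ℕ):ℝ) * Real.log ((L * ∏ c ∈ S, c : ℕ):ℝ)
        - ((L * ∏ c ∈ S, c : ℕ):ℝ) + 1 + Real.log N := by
      intro S hS
      refine le_trans (log_fact_bounds _ (haS1 S hS)).2 ?_
      have : Real.log ((L * ∏ c ∈ S, c : ℕ):ℝ) ≤ Real.log N := by
        apply Real.log_le_log (by exact_mod_cast haS1 S hS)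
        exact_mod_cast haSN S hS
      linarith
    have hsum_lo : ∑ S ∈ P, (((L * ∏ c ∈ S, c : ℕ):ℝ) * Real.log ((L * ∏ c ∈ S, c : ℕ):ℝ)
        - ((L * ∏ c ∈ S, c : ℕ):ℝ) + 1) ≤ ∑ S ∈ P, Real.log (Nat.factorial (L * ∏ c ∈ S, c)) :=
      Finset.sum_le_sum hSlo
    have hsum_hi : ∑ S ∈ P, Real.log (Nat.factorial (L * ∏ c ∈ S, c))
        ≤ ∑ S ∈ P, (((L * ∏ c ∈ S, c : ℕ):ℝ) * Real.log ((L * ∏ c ∈ S, c : ℕ):ℝ)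
        - ((L * ∏ c ∈ S, c : ℕ):ℝ) + 1 + Real.log N) := Finset.sum_le_sum hShi
    rw [Finset.sum_add_distrib] at hsum_hi
    have e1 : ∑ S ∈ P, (((L * ∏ c ∈ S, c : ℕ):ℝ) * Real.log ((L * ∏ c ∈ S, c : ℕ):ℝ)
        - ((L * ∏ c ∈ S, c : ℕ):ℝ) + 1)
        = (∑ S ∈ P, ((L * ∏ c ∈ S, c : ℕ):ℝ) * Real.log ((L * ∏ c ∈ S, c : ℕ):ℝ))
          - (N:ℝ) + 2 ^ k := by
      rw [Finset.sum_add_distrib, Finset.sum_sub_distrib, hsumaS, Finset.sum_const, ← hcard]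
      push_cast
      ring
    have hconst : ∑ _S ∈ P, Real.log (N:ℝ) = 2 ^ k * Real.log N := by
      rw [Finset.sum_const, ← hcard]; ring
    have h2k : (2:ℝ) ^ k + 1 ≤ 2 ^ M := by
      have : (2:ℝ) ^ k + 1 ≤ 2 ^ k + 2 ^ k := by
        have : (1:ℝ) ≤ 2 ^ k := by exact_mod_cast Nat.one_le_two_pow
        linarith
      calc (2:ℝ) ^ k + 1 ≤ 2 ^ k + 2 ^ k := this
        _ = 2 ^ (k+1) := by ring
        _ = 2 ^ M := by rw [hk]
    rw [abs_le]
    constructor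
    · have := hsum_hi
      rw [e1] at hsum_lo
      rw [hconst] at this
      have e2 : ∑ S ∈ P, (((L * ∏ c ∈ S, c : ℕ):ℝ) * Real.log ((L * ∏ c ∈ S, c : ℕ):ℝ)
          - ((L * ∏ c ∈ S, c : ℕ):ℝ) + 1)
          = (∑ S ∈ P, ((L * ∏ c ∈ S, c : ℕ):ℝ) * Real.log ((L * ∏ c ∈ S, c : ℕ):ℝ))
            - (N:ℝ) + 2 ^ k := e1
      rw [e2] at this
      have hp2 : (0:ℝ) ≤ 2 ^ k := by positivity
      nlinarith [hlogN0, hNR]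
    · rw [e1] at hsum_lo
      rw [hconst] at hsum_hi
      have e2 := e1
      rw [e2] at hsum_hi
      have hp2 : (0:ℝ) ≤ 2 ^ k := by positivity
      nlinarith [hlogN0, hNR]
  -- main term computation
  have hMfact : ∏ c ∈ A, ((c:ℝ)+1) = (Nat.factorial M : ℝ) := by
    rw [hA_def, prod_Icc_add_one, hk]
  have hLpos : (0:ℝ) < (L:ℝ) := by exact_mod_cast hL
  have hstep1 : ∑ S ∈ P, ((L * ∏ c ∈ S, c : ℕ):ℝ) * Real.log ((L * ∏ c ∈ S, c : ℕ):ℝ)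
      = (N:ℝ) * Real.log L
        + (L:ℝ) * ∑ S ∈ P, (∏ c ∈ S, (c:ℝ)) * Real.log (∏ c ∈ S, (c:ℝ)) := by
    have hterm : ∀ S ∈ P, ((L * ∏ c ∈ S, c : ℕ):ℝ) * Real.log ((L * ∏ c ∈ S, c : ℕ):ℝ)
        = ((L * ∏ c ∈ S, c : ℕ):ℝ) * Real.log L
          + (L:ℝ) * ((∏ c ∈ S, (c:ℝ)) * Real.log (∏ c ∈ S, (c:ℝ))) := by
      intro S hS
      have hp0 : (0:ℝ) < ∏ c ∈ S, (c:ℝ) := by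
        have h := hppos S hS
        have h2 : (0:ℝ) < ((∏ c ∈ S, c : ℕ):ℝ) := by exact_mod_cast h
        rwa [Nat.cast_prod] at h2
      have hcast : ((L * ∏ c ∈ S, c : ℕ):ℝ) = (L:ℝ) * ∏ c ∈ S, (c:ℝ) := by push_cast; ring
      rw [hcast, Real.log_mul hLpos.ne' hp0.ne']
      ring
    rw [Finset.sum_congr rfl hterm, Finset.sum_add_distrib, ← Finset.sum_mul, hsumaS,
      ← Finset.mul_sum]
  have hstep2 : (L:ℝ) * ∑ S ∈ P, (∏ c ∈ S, (c:ℝ)) * Real.log (∏ c ∈ S, (c:ℝ))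
      = (N:ℝ) * ∑ c ∈ A, ((c:ℝ) * Real.log c) / ((c:ℝ)+1) := by
    have hlogp : ∀ S ∈ P, (∏ c ∈ S, (c:ℝ)) * Real.log (∏ c ∈ S, (c:ℝ))
        = (∏ c ∈ S, (c:ℝ)) * ∑ c ∈ S, Real.log c := by
      intro S hS
      rw [Real.log_prod]
      intro c hc
      have := hcmem c (Finset.mem_powerset.1 hS hc)
      exact_mod_cast Nat.one_le_iff_ne_zero.1 this
    rw [Finset.sum_congr rfl hlogp, swap_identity, Finset.mul_sum, Finset.mul_sum]
    apply Finset.sum_congr rfl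
    intro c hc
    have hc1 : (1:ℝ) ≤ (c:ℝ) := by exact_mod_cast hcmem c hc
    have hc1p : (0:ℝ) < (c:ℝ) + 1 := by linarith
    have herase : ∏ d ∈ A.erase c, ((d:ℝ)+1) = (Nat.factorial M : ℝ) / ((c:ℝ)+1) := by
      have h := Finset.mul_prod_erase A (fun d : ℕ => (d:ℝ)+1) hc
      rw [hMfact] at h
      rw [eq_div_iff hc1p.ne']
      linarith
    rw [herase, hN_def]
    push_cast
    field_simp
  have hlogN : Real.log (N:ℝ) = Real.log L + Real.log (Nat.factorial M) := by
    rw [hN_def]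
    push_cast
    rw [Real.log_mul hLpos.ne' (by exact_mod_cast (Nat.factorial_pos M).ne')]
  have hlogfact : Real.log ((Nat.factorial M : ℕ):ℝ)
      = Real.log M + ∑ c ∈ A, Real.log c := by
    have hMprod : ((Nat.factorial M : ℕ):ℝ) = ∏ c ∈ Finset.Icc 1 M, (c:ℝ) := by
      rw [show Finset.Icc 1 M = Finset.Ico 1 (M+1) by rw [Finset.Ico_add_one_right_eq_Icc], ← Nat.cast_prod]
      exact_mod_cast congrArg (fun n : ℕ => (n:ℝ)) (Finset.prod_Ico_id_eq_factorial M).symm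
    rw [hMprod, Real.log_prod (by
      intro c hc
      have := (Finset.mem_Icc.1 hc).1
      exact_mod_cast Nat.one_le_iff_ne_zero.1 this)]
    rw [← hk, Finset.sum_Icc_succ_top (by omega : 1 ≤ k + 1), hk, hA_def]
    ring
  have hmain_eq : main = (N:ℝ) * (Real.log M + ∑ c ∈ A, Real.log c / ((c:ℝ)+1)) := by
    rw [hmain_def, hstep1, hstep2, hlogN, hlogfact]
    have : ∑ c ∈ A, Real.log c / ((c:ℝ)+1)
        = (∑ c ∈ A, Real.log c) - ∑ c ∈ A, ((c:ℝ) * Real.log c) / ((c:ℝ)+1) := by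
      rw [← Finset.sum_sub_distrib]
      apply Finset.sum_congr rfl
      intro c hc
      have hc1 : (1:ℝ) ≤ (c:ℝ) := by exact_mod_cast hcmem c hc
      have hc1p : ((c:ℝ) + 1) ≠ 0 := by linarith
      field_simp
      ring
    rw [this]
    ring
  -- apply A_bound
  have hAIco : A = Finset.Ico 1 M := by
    rw [hA_def, ← hk, Finset.Ico_add_one_right_eq_Icc]
  have hAb : |(∑ c ∈ A, Real.log c / ((c:ℝ)+1)) - Real.log M ^ 2 / 2| ≤ 3 + Real.log M := by
    rw [hAIco]
    exact A_bound M hM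
  have hlogM0 : (0:ℝ) ≤ Real.log M := Real.log_nonneg (by exact_mod_cast le_trans (by norm_num) hM)
  have hmain_close : |main - (N:ℝ) * Real.log M ^ 2 / 2| ≤ (N:ℝ) * (4 + 4 * Real.log M) := by
    rw [hmain_eq]
    have : (N:ℝ) * (Real.log M + ∑ c ∈ A, Real.log c / ((c:ℝ)+1)) - (N:ℝ) * Real.log M ^ 2 / 2
        = (N:ℝ) * (Real.log M + ((∑ c ∈ A, Real.log c / ((c:ℝ)+1)) - Real.log M ^ 2 / 2)) := by
      ring
    rw [this, abs_mul, abs_of_pos hNR]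
    apply mul_le_mul_of_nonneg_left _ hNR.le
    rw [abs_le] at hAb ⊢
    constructor <;> nlinarith [hAb.1, hAb.2, hlogM0]
  -- bound 1 + log N
  have hlogL : Real.log L ≤ (L:ℝ) - 1 := by
    have := Real.log_le_sub_one_of_pos hLpos
    linarith
  have hlogfact_le : Real.log ((Nat.factorial M : ℕ):ℝ) ≤ (M:ℝ) * Real.log M := by
    rw [hlogfact]
    have hsum : ∑ c ∈ A, Real.log c ≤ ∑ c ∈ A, Real.log M := by
      apply Finset.sum_le_sum
      intro c hc
      have h1 : (0:ℝ) < (c:ℝ) := by exact_mod_cast hcmem c hc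
      apply Real.log_le_log h1
      have : c ≤ M := by
        have := (Finset.mem_Icc.1 hc).2
        omega
      exact_mod_cast this
    have hcardA : (A.card : ℝ) = (k:ℝ) := by
      rw [hA_def, Nat.card_Icc]; push_cast; norm_num
    have : ∑ c ∈ A, Real.log M = (k:ℝ) * Real.log M := by
      rw [Finset.sum_const, ← hcardA]; ring
    rw [this] at hsum
    have hkM : (k:ℝ) ≤ (M:ℝ) - 1 := by
      have : (k:ℝ) + 1 = (M:ℝ) := by exact_mod_cast hk
      linarith
    nlinarith
  have hlogN_le : 1 + Real.log (N:ℝ) ≤ (L:ℝ) + (M:ℝ) * Real.log M := by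
    rw [hlogN]
    linarith
  -- combine
  have h2M : (0:ℝ) < 2 ^ M := by positivity
  refine le_trans (abs_sub_le _ main _) ?_
  have hmul := mul_le_mul_of_nonneg_left hlogN_le h2M.le
  linarith [hstirling, hmain_close]
/-
  calc |Real.log ((Nat.factorial N : ℝ) / ∏ S ∈ P, (Nat.factorial (L * ∏ c ∈ S, c) : ℝ))
      - (N:ℝ) * Real.log M ^ 2 / 2|
      ≤ |Real.log ((Nat.factorial N : ℝ) / ∏ S ∈ P, (Nat.factorial (L * ∏ c ∈ S, c) : ℝ)) - main|
        + |main - (N:ℝ) * Real.log M ^ 2 / 2| := by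
        have := abs_sub_abs_le_abs_sub -- dummy
        exact abs_sub_le _ main _
    _ ≤ 2 ^ M * (1 + Real.log N) + (N:ℝ) * (4 + 4 * Real.log M) := by
        linarith [hstirling, hmain_close]
    _ ≤ (N:ℝ) * (4 + 4 * Real.log M) + 2 ^ M * ((L:ℝ) + (M:ℝ) * Real.log M) := by
        have := mul_le_mul_of_nonneg_left hlogN_le h2M.le
        linarith
-/

noncomputable def Bfun (M : ℕ) : ℝ := 16 / Real.log M + 4 * 4 ^ M / Nat.factorial M

lemma Bfun_tendsto : Tendsto Bfun atTop (nhds 0) := by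
  have h1 : Tendsto (fun M : ℕ => 16 / Real.log M) atTop (nhds 0) := by
    have hlog : Tendsto (fun M : ℕ => Real.log M) atTop atTop :=
      Real.tendsto_log_atTop.comp tendsto_natCast_atTop_atTop
    simpa [div_eq_mul_inv] using hlog.inv_tendsto_atTop.const_mul (16:ℝ)
  have h2 : Tendsto (fun M : ℕ => 4 * 4 ^ M / (Nat.factorial M : ℝ)) atTop (nhds 0) := by
    have := (Real.summable_pow_div_factorial (4:ℝ)).tendsto_atTop_zero
    have := this.const_mul (4:ℝ)
    simpa [mul_div_assoc] using this
  have h3 := h1.add h2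
  rw [add_zero] at h3
  exact h3

lemma ratio_bound (L M : ℕ) (hL : 1 ≤ L) (hM : 5 ≤ M) :
    |Real.log ((Nat.factorial (L * Nat.factorial M) : ℝ) /
        ∏ S ∈ (Finset.Icc 1 (M - 1)).powerset, (Nat.factorial (L * ∏ c ∈ S, c) : ℝ))
      - ((L * Nat.factorial M : ℕ):ℝ) * Real.log M ^ 2 / 2|
    ≤ Bfun M * (((L * Nat.factorial M : ℕ):ℝ) * Real.log M ^ 2 / 2) := by
  have hLR : (1:ℝ) ≤ (L:ℝ) := by exact_mod_cast hL
  have hMR : (3:ℝ) ≤ (M:ℝ) := by exact_mod_cast le_trans (by norm_num) hM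
  have hlog1 : (1:ℝ) ≤ Real.log M := by
    rw [Real.le_log_iff_exp_le (by linarith)]
    exact le_trans Real.exp_one_lt_d9.le (by linarith)
  have hfac : (0:ℝ) < (Nat.factorial M : ℝ) := by exact_mod_cast Nat.factorial_pos M
  have h2M : (0:ℝ) < (2:ℝ)^M := by positivity
  have h4eq : (4:ℝ)^M = 2^M * 2^M := by rw [← mul_pow]; norm_num
  have h2MM : 2*(M:ℝ) ≤ 2^M := by
    have h1 : M - 1 < 2^(M-1) := Nat.lt_two_pow_self
    have h2 : 2 * M ≤ 2^M := by
      have h3 : 2^M = 2 * 2^(M-1) := by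
        rw [← pow_succ']
        congr 1
        omega
      omega
    exact_mod_cast h2
  refine le_trans (main_est L M hL hM) ?_
  have hBG : Bfun M * (((L * Nat.factorial M : ℕ):ℝ) * Real.log M ^ 2 / 2)
      = 8 * ((L * Nat.factorial M : ℕ):ℝ) * Real.log M
        + 2 * 4^M * (L:ℝ) * Real.log M ^ 2 := by
    rw [Bfun]
    have hlogne : Real.log (M:ℝ) ≠ 0 := by linarith
    push_cast
    field_simp
    ring
  rw [hBG]
  have hNR : (0:ℝ) < ((L * Nat.factorial M : ℕ):ℝ) := by
    have : 0 < L * Nat.factorial M := Nat.mul_pos (by omega) (Nat.factorial_pos M)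
    exact_mod_cast this
  rw [h4eq]
  have hx1 : (1:ℝ) ≤ 2^M := by exact_mod_cast Nat.one_le_two_pow
  have hlogsq : (1:ℝ) ≤ Real.log M ^ 2 := by nlinarith
  have hi : (2:ℝ)^M * (L:ℝ) ≤ (2:ℝ)^M * (2:ℝ)^M * (L:ℝ) * Real.log M ^ 2 := by
    have ha : (2:ℝ)^M * (L:ℝ) ≤ (2:ℝ)^M * (2:ℝ)^M * (L:ℝ) := by
      nlinarith [mul_nonneg (mul_nonneg h2M.le (sub_nonneg.2 hx1)) (by linarith : (0:ℝ) ≤ (L:ℝ))]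
    calc (2:ℝ)^M * (L:ℝ) = ((2:ℝ)^M * (L:ℝ)) * 1 := (mul_one _).symm
      _ ≤ ((2:ℝ)^M * (2:ℝ)^M * (L:ℝ)) * (Real.log M ^ 2) :=
          mul_le_mul ha hlogsq zero_le_one (by positivity)
  have hii : (2:ℝ)^M * ((M:ℝ) * Real.log M) ≤ (2:ℝ)^M * (2:ℝ)^M * (L:ℝ) * Real.log M ^ 2 := by
    have hM2 : (M:ℝ) ≤ (2:ℝ)^M := by linarith
    have hs1 : (2:ℝ)^M * ((M:ℝ) * Real.log M) ≤ (2:ℝ)^M * ((2:ℝ)^M * Real.log M) := by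
      apply mul_le_mul_of_nonneg_left _ h2M.le
      apply mul_le_mul_of_nonneg_right hM2 (by linarith)
    have hs2 : (2:ℝ)^M * ((2:ℝ)^M * Real.log M) ≤ (2:ℝ)^M * (2:ℝ)^M * (L:ℝ) * Real.log M ^ 2 := by
      have e1 : (2:ℝ)^M * ((2:ℝ)^M * Real.log M) = (2:ℝ)^M * (2:ℝ)^M * Real.log M := by ring
      rw [e1]
      have : Real.log M ≤ (L:ℝ) * Real.log M ^ 2 := by nlinarith
      calc (2:ℝ)^M * (2:ℝ)^M * Real.log M ≤ (2:ℝ)^M * (2:ℝ)^M * ((L:ℝ) * Real.log M ^ 2) := by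
            apply mul_le_mul_of_nonneg_left this (by positivity)
        _ = (2:ℝ)^M * (2:ℝ)^M * (L:ℝ) * Real.log M ^ 2 := by ring
    linarith
  nlinarith [hNR, hlog1, hi, hii]



/-- Asymptotics of the IRV fooling set size: with `n j = ℓ j · (m j)!` and
`m j → ∞` (`ℓ j ≥ 1` arbitrary, so that `ℓ`, `m`, or both tend to infinity),
`log (n! / ∏_{S ⊆ {1,…,m-1}} (ℓ ∏_{c ∈ S} c)!)` is asymptotically equivalent
to `n (log m)² / 2`. -/
theorem stmt12 (ℓ m : ℕ → ℕ) (hℓ : ∀ j, 1 ≤ ℓ j)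
    (hm : Tendsto m atTop atTop)
    (n : ℕ → ℕ) (hn : ∀ j, n j = ℓ j * Nat.factorial (m j)) :
    (fun j => Real.log ((Nat.factorial (n j) : ℝ) /
        ∏ S ∈ (Finset.Icc 1 (m j - 1)).powerset,
          (Nat.factorial (ℓ j * ∏ c ∈ S, c) : ℝ)))
      ~[atTop] fun j => (n j : ℝ) * (Real.log (m j)) ^ 2 / 2 := by
  have hM5 : ∀ᶠ j in atTop, 5 ≤ m j := hm.eventually_ge_atTop 5
  have hGpos : ∀ᶠ j in atTop, 0 < (n j : ℝ) * (Real.log (m j)) ^ 2 / 2 := by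
    filter_upwards [hM5] with j h5
    have hn1 : 1 ≤ n j := by
      rw [hn j]
      exact Nat.one_le_iff_ne_zero.2 (Nat.mul_ne_zero (by have := hℓ j; omega)
        (Nat.factorial_pos (m j)).ne')
    have hnR : (0:ℝ) < (n j : ℝ) := by exact_mod_cast hn1
    have hlog1 : (1:ℝ) ≤ Real.log (m j) := by
      rw [Real.le_log_iff_exp_le (by exact_mod_cast (by omega : 0 < m j))]
      refine le_trans Real.exp_one_lt_d9.le ?_
      have : (5:ℝ) ≤ (m j : ℝ) := by exact_mod_cast h5
      linarith
    positivity
  rw [isEquivalent_iff_tendsto_one (hGpos.mono fun j h => h.ne')]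
  have hb : ∀ᶠ j in atTop,
      ‖Real.log ((Nat.factorial (n j) : ℝ) /
          ∏ S ∈ (Finset.Icc 1 (m j - 1)).powerset, (Nat.factorial (ℓ j * ∏ c ∈ S, c) : ℝ))
        / ((n j : ℝ) * (Real.log (m j)) ^ 2 / 2) - 1‖ ≤ Bfun (m j) := by
    filter_upwards [hM5, hGpos] with j h5 hG
    have hkey := ratio_bound (ℓ j) (m j) (hℓ j) h5
    rw [← hn j] at hkey
    set F := Real.log ((Nat.factorial (n j) : ℝ) /
        ∏ S ∈ (Finset.Icc 1 (m j - 1)).powerset, (Nat.factorial (ℓ j * ∏ c ∈ S, c) : ℝ))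
    set G := (n j : ℝ) * (Real.log (m j)) ^ 2 / 2
    have hdiv : F / G - 1 = (F - G) / G := by field_simp
    rw [Real.norm_eq_abs, hdiv, abs_div, abs_of_pos hG, div_le_iff₀ hG]
    exact hkey
  have h0 : Tendsto (fun j => Real.log ((Nat.factorial (n j) : ℝ) /
          ∏ S ∈ (Finset.Icc 1 (m j - 1)).powerset, (Nat.factorial (ℓ j * ∏ c ∈ S, c) : ℝ))
        / ((n j : ℝ) * (Real.log (m j)) ^ 2 / 2) - 1) atTop (nhds 0) :=
    squeeze_zero_norm' hb (Bfun_tendsto.comp hm)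
  have h1 := h0.add_const 1
  simpa [Pi.div_def] using h1
end

section
/- Powers-of-two tie-breaking voters: consider the single-peaked profile over candidates {0,...,m-1} with, for each j from 0 to m−1, exactly 2^j voters whose ranking is (m−1−j ≻ m−2−j ≻ ... ≻ 0 ≻ m−j ≻ m−j+1 ≻ ... ≻ m−1). Then at every round of IRV the plurality scores of the active candidates are pairwise distinct, so no ties ever occur, and the elimination order is (m−1, m−2, ..., 1) with candidate 0 winning. -/
/-- The most-preferred active candidate on a ballot. -/
def topIn (A : Finset ℕ) (b : List ℕ) : Option ℕ :=
  (b.filter (fun c => decide (c ∈ A))).head?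

/-- The plurality score of candidate `c` in profile `P` with active set `A`. -/
def score (P : List (List ℕ)) (A : Finset ℕ) (c : ℕ) : ℕ :=
  P.countP (fun b => topIn A b == some c)

/-- The candidate eliminated from active set `A`: among the active candidates
with minimal plurality score, the one with the largest index (no tie-breaking
is actually needed when the scores are pairwise distinct). -/
noncomputable def elim (P : List (List ℕ)) (A : Finset ℕ) : Option ℕ :=
  (A.filter (fun c => ∀ d ∈ A, score P A c ≤ score P A d)).max

/-- The elimination order of IRV (with fuel). -/
noncomputable def irvOrderAux (P : List (List ℕ)) : ℕ → Finset ℕ → List ℕ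
  | 0, _ => []
  | fuel + 1, A =>
      if A.card ≤ 1 then []
      else
        match elim P A with
        | none => []
        | some c => c :: irvOrderAux P fuel (A.erase c)

/-- The IRV elimination order, starting from active set `A`. -/
noncomputable def irvOrder (P : List (List ℕ)) (A : Finset ℕ) : List ℕ :=
  irvOrderAux P A.card A

/-- The ranking `(c ≻ c-1 ≻ ⋯ ≻ 0 ≻ c+1 ≻ c+2 ≻ ⋯ ≻ m-1)` with peak `c`;
it is single-peaked with respect to the axis `(0, …, m-1)`. -/
def vee (m c : ℕ) : List ℕ :=
  (List.range (c + 1)).reverse ++ (List.range m).drop (c + 1)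

/-- The tie-breaking profile: for each `j < m`, exactly `2^j` voters with
ranking `(m-1-j ≻ m-2-j ≻ ⋯ ≻ 0 ≻ m-j ≻ m-j+1 ≻ ⋯ ≻ m-1)`. -/
def tbProfile (m : ℕ) : List (List ℕ) :=
  (List.range m).flatMap (fun j => List.replicate (2 ^ j) (vee m (m - 1 - j)))


lemma filter_range_mem (n k : ℕ) :
    (List.range k).filter (fun x => decide (x ∈ Finset.range n)) = List.range (min n k) := by
  induction k with
  | zero => simp
  | succ k ih =>
      rw [List.range_succ, List.filter_append, ih]
      by_cases h : k < n
      · have : min n (k+1) = k+1 := by omega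
        have h2 : min n k = k := by omega
        simp [this, h2, List.range_succ, Finset.mem_range, h]
      · have : min n (k+1) = min n k := by omega
        simp [this, Finset.mem_range, h]

lemma head?_reverse_range (k : ℕ) (h : 1 ≤ k) :
    (List.range k).reverse.head? = some (k - 1) := by
  obtain ⟨j, rfl⟩ : ∃ j, k = j + 1 := ⟨k - 1, by omega⟩
  rw [List.range_succ, List.reverse_append]
  simp

lemma topIn_vee (m n c : ℕ) (hn : 1 ≤ n) :
    topIn (Finset.range n) (vee m c) = some (min c (n - 1)) := by
  unfold topIn vee
  rw [List.filter_append, List.filter_reverse, filter_range_mem,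
    List.head?_append_of_ne_nil, head?_reverse_range _ (by omega)]
  · congr 1; omega
  · intro h
    have := congrArg List.length h
    simp at this
    omega

lemma countP_replicate' {α} (p : α → Bool) (n : ℕ) (a : α) :
    List.countP p (List.replicate n a) = if p a then n else 0 := by
  induction n with
  | zero => simp
  | succ n ih =>
      rw [List.replicate_succ, List.countP_cons, ih]
      by_cases h : p a <;> simp [h]

lemma list_sum_range (f : ℕ → ℕ) (n : ℕ) :
    ((List.range n).map f).sum = ∑ i ∈ Finset.range n, f i := by
  induction n with
  | zero => simp
  | succ n ih => rw [List.range_succ, Finset.sum_range_succ, List.map_append]; simp [ih]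

lemma two_pow_sum (k : ℕ) : ∑ i ∈ Finset.range k, 2 ^ i = 2 ^ k - 1 := by
  induction k with
  | zero => simp
  | succ k ih =>
      rw [Finset.sum_range_succ, ih, pow_succ]
      have : 0 < 2 ^ k := Nat.pow_pos (by norm_num)
      omega

lemma score_tb (m n c : ℕ) (hn : 1 ≤ n) (hnm : n ≤ m) (hc : c < n) :
    score (tbProfile m) (Finset.range n) c
      = if c = n - 1 then 2 ^ (m - n + 1) - 1 else 2 ^ (m - 1 - c) := by
  unfold score tbProfile
  rw [List.countP_flatMap, list_sum_range]
  have hsum : ∀ j ∈ Finset.range m,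
      (List.countP (fun b => topIn (Finset.range n) b == some c) ∘
        fun j => List.replicate (2 ^ j) (vee m (m - 1 - j))) j
      = if min (m - 1 - j) (n - 1) = c then 2 ^ j else 0 := by
    intro j _
    simp only [Function.comp_apply]
    rw [countP_replicate', topIn_vee m n _ hn]
    simp
  rw [Finset.sum_congr rfl hsum]
  by_cases hce : c = n - 1
  · subst hce
    rw [if_pos rfl]
    have h1 : ∀ j ∈ Finset.range m,
        (if min (m - 1 - j) (n - 1) = n - 1 then 2 ^ j else 0)
          = if j < m - n + 1 then 2 ^ j else 0 := by
      intro j hj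
      rw [Finset.mem_range] at hj
      exact if_congr (by omega) rfl rfl
    rw [Finset.sum_congr rfl h1, ← Finset.sum_filter]
    have h2 : (Finset.range m).filter (· < m - n + 1) = Finset.range (m - n + 1) := by
      ext x; simp [Finset.mem_filter, Finset.mem_range]; omega
    rw [h2, two_pow_sum]
  · rw [if_neg hce]
    have h1 : ∀ j ∈ Finset.range m,
        (if min (m - 1 - j) (n - 1) = c then 2 ^ j else 0)
          = if j = m - 1 - c then 2 ^ j else 0 := by
      intro j hj
      rw [Finset.mem_range] at hj
      exact if_congr (by omega) rfl rfl
    rw [Finset.sum_congr rfl h1, Finset.sum_ite_eq' (Finset.range m) (m - 1 - c) (2 ^ ·)]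
    rw [if_pos (by rw [Finset.mem_range]; omega)]

lemma score_lt (m n c : ℕ) (h2 : 2 ≤ n) (hnm : n ≤ m) (hc : c < n - 1) :
    score (tbProfile m) (Finset.range n) (n - 1) < score (tbProfile m) (Finset.range n) c := by
  rw [score_tb m n (n - 1) (by omega) hnm (by omega), score_tb m n c (by omega) hnm (by omega),
    if_pos rfl, if_neg (by omega)]
  have h1 : 2 ^ (m - n + 1) ≤ 2 ^ (m - 1 - c) := Nat.pow_le_pow_right (by norm_num) (by omega)
  have h0 : 0 < 2 ^ (m - n + 1) := Nat.pow_pos (by norm_num)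
  omega

lemma score_ne (m n c d : ℕ) (h2 : 2 ≤ n) (hnm : n ≤ m) (hc : c < n) (hd : d < n)
    (hcd : c ≠ d) :
    score (tbProfile m) (Finset.range n) c ≠ score (tbProfile m) (Finset.range n) d := by
  by_cases hcn : c = n - 1
  · subst hcn
    exact (score_lt m n d h2 hnm (by omega)).ne
  · by_cases hdn : d = n - 1
    · subst hdn
      exact (score_lt m n c h2 hnm (by omega)).ne'
    · rw [score_tb m n c (by omega) hnm hc, score_tb m n d (by omega) hnm hd,
        if_neg hcn, if_neg hdn]
      intro h
      have := Nat.pow_right_injective (le_refl 2) h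
      omega

lemma elim_tb (m n : ℕ) (h2 : 2 ≤ n) (hnm : n ≤ m) :
    elim (tbProfile m) (Finset.range n) = some (n - 1) := by
  unfold elim
  have hf : (Finset.range n).filter
      (fun c => ∀ d ∈ Finset.range n,
        score (tbProfile m) (Finset.range n) c ≤ score (tbProfile m) (Finset.range n) d)
      = {n - 1} := by
    ext c
    simp only [Finset.mem_filter, Finset.mem_range, Finset.mem_singleton]
    constructor
    · rintro ⟨hc, hmin⟩
      by_contra hne
      have h1 := hmin (n - 1) (by omega)
      have h2' := score_lt m n c h2 hnm (by omega)
      omega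
    · rintro rfl
      refine ⟨by omega, fun d hd => ?_⟩
      by_cases hdn : d = n - 1
      · subst hdn; exact le_refl _
      · exact (score_lt m n d h2 hnm (by omega)).le
  rw [hf, Finset.max_singleton]
  rfl

lemma irv_aux (m : ℕ) : ∀ n, 1 ≤ n → n ≤ m →
    irvOrderAux (tbProfile m) n (Finset.range n)
      = ((List.range (n - 1)).map (· + 1)).reverse := by
  intro n
  induction n with
  | zero => omega
  | succ n ih =>
      intro _ hnm
      rw [irvOrderAux]
      rcases Nat.eq_zero_or_pos n with rfl | hn
      · simp
      · rw [if_neg (by rw [Finset.card_range]; omega),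
          elim_tb m (n + 1) (by omega) hnm]
        have herase : (Finset.range (n + 1)).erase (n + 1 - 1) = Finset.range n := by
          rw [Nat.add_sub_cancel, Finset.range_add_one,
            Finset.erase_insert (by simp)]
        show (n + 1 - 1) :: irvOrderAux (tbProfile m) n
            ((Finset.range (n + 1)).erase (n + 1 - 1))
          = ((List.range (n + 1 - 1)).map (· + 1)).reverse
        rw [herase, ih (by omega) (by omega), Nat.add_sub_cancel]
        obtain ⟨k, rfl⟩ : ∃ k, n = k + 1 := ⟨n - 1, by omega⟩
        rw [Nat.add_sub_cancel, List.range_succ, List.map_append, List.reverse_append]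
        simp

lemma foldl_erase_lem (k : ℕ) :
    (((List.range k).map (· + 1)).reverse).foldl Finset.erase (Finset.range (k + 1)) = {0} := by
  induction k with
  | zero => simp [Finset.range_one]
  | succ k ih =>
      rw [List.range_succ, List.map_append, List.reverse_append]
      simp only [List.map_cons, List.map_nil, List.reverse_cons, List.reverse_nil,
        List.nil_append, List.singleton_append, List.foldl_cons]
      have h : (Finset.range (k + 2)).erase (k + 1) = Finset.range (k + 1) := by
        rw [Finset.range_add_one, Finset.erase_insert (by simp)]
      rw [h, ih]

/-- In the powers-of-two single-peaked profile, at every round of IRV the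
plurality scores of the active candidates are pairwise distinct (so no ties
ever occur), the elimination order is `(m-1, m-2, …, 1)`, and candidate `0`
wins. -/
theorem stmt17 (m : ℕ) (hm : 0 < m) :
    (∀ t, t < m - 1 →
        ∀ c ∈ Finset.range (m - t), ∀ d ∈ Finset.range (m - t), c ≠ d →
          score (tbProfile m) (Finset.range (m - t)) c
            ≠ score (tbProfile m) (Finset.range (m - t)) d) ∧
      irvOrder (tbProfile m) (Finset.range m)
          = ((List.range (m - 1)).map (· + 1)).reverse ∧
      (irvOrder (tbProfile m) (Finset.range m)).foldl
          Finset.erase (Finset.range m) = {0} := by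
  have horder : irvOrder (tbProfile m) (Finset.range m)
      = ((List.range (m - 1)).map (· + 1)).reverse := by
    unfold irvOrder
    rw [Finset.card_range]
    exact irv_aux m m hm le_rfl
  refine ⟨?_, horder, ?_⟩
  · intro t ht c hc d hd hcd
    rw [Finset.mem_range] at hc hd
    exact score_ne m (m - t) c d (by omega) (by omega) hc hd hcd
  · rw [horder]
    obtain ⟨k, rfl⟩ : ∃ k, m = k + 1 := ⟨m - 1, by omega⟩
    rw [Nat.add_sub_cancel]
    exact foldl_erase_lem k
end
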